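/- Let G be a group and let S be a G-graded ring. Then S is nearly epsilon-strongly G-graded if and only if S is symmetrically G-graded and for each g ∈ G the ring S_g S_{g⁻¹} is s-unital. -/

import Mathlib

/-- The product `AB` of two additive subgroups of a (possibly non-unital) ring:
the additive subgroup generated by all products `ab` with `a ∈ A`, `b ∈ B`. -/
def sgMul {S : Type*} [NonUnitalRing S] (A B : AddSubgroup S) : AddSubgroup S :=
  AddSubgroup.closure {x | ∃ a ∈ A, ∃ b ∈ B, x = a * b}

section
variable {G : Type*} [Group G] {S : Type*} [NonUnitalRing S]

/-- A `G`-graded ring `S = ⊕_{g ∈ G} S_g` is *epsilon-strongly `G`-graded* if for every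
`g ∈ G` there are `ε ∈ S_g S_{g⁻¹}` and `ε' ∈ S_{g⁻¹} S_g` with `ε s = s` and `s ε' = s`
for all `s ∈ S_g`. -/
def IsEpsilonStronglyGraded (𝒜 : G → AddSubgroup S) : Prop :=
  ∀ g : G, ∃ ε ∈ sgMul (𝒜 g) (𝒜 g⁻¹), ∃ ε' ∈ sgMul (𝒜 g⁻¹) (𝒜 g),
    ∀ s ∈ 𝒜 g, ε * s = s ∧ s * ε' = s

/-- `S` is *symmetrically `G`-graded* if `S_g S_{g⁻¹} S_g = S_g` for all `g ∈ G`. -/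
def IsSymmetricallyGraded (𝒜 : G → AddSubgroup S) : Prop :=
  ∀ g : G, sgMul (sgMul (𝒜 g) (𝒜 g⁻¹)) (𝒜 g) = 𝒜 g

/-- `S` is *nearly epsilon-strongly `G`-graded* if for every `g ∈ G` and `s ∈ S_g` one has
`s ∈ (S_g S_{g⁻¹}) s` and `s ∈ s (S_{g⁻¹} S_g)`. -/
def IsNearlyEpsilonStronglyGraded (𝒜 : G → AddSubgroup S) : Prop :=
  ∀ g : G, ∀ s ∈ 𝒜 g,
    (∃ t ∈ sgMul (𝒜 g) (𝒜 g⁻¹), t * s = s) ∧ (∃ t ∈ sgMul (𝒜 g⁻¹) (𝒜 g), s * t = s)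

/-- An additive subgroup of a ring is a *unital* ring if it contains a two-sided
multiplicative identity for itself. -/
def IsUnitalSubgroup (A : AddSubgroup S) : Prop :=
  ∃ u ∈ A, ∀ a ∈ A, u * a = a ∧ a * u = a

/-- An additive subgroup of a ring is an *s-unital* ring if `t ∈ At` and `t ∈ tA`
for every `t ∈ A`. -/
def IsSUnitalSubgroup (A : AddSubgroup S) : Prop :=
  ∀ t ∈ A, (∃ a ∈ A, a * t = t) ∧ (∃ b ∈ A, t * b = t)

end

section Aux
variable {S : Type*} [NonUnitalRing S]

lemma NESG.mem_sgMul {A B : AddSubgroup S} {a b : S} (ha : a ∈ A) (hb : b ∈ B) :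
    a * b ∈ sgMul A B :=
  AddSubgroup.subset_closure ⟨a, ha, b, hb, rfl⟩

lemma NESG.sgMul_le {A B : AddSubgroup S} {C : AddSubgroup S}
    (h : ∀ a ∈ A, ∀ b ∈ B, a * b ∈ C) : sgMul A B ≤ C := by
  refine (AddSubgroup.closure_le _).2 ?_
  rintro x ⟨a, ha, b, hb, rfl⟩
  exact h a ha b hb

lemma NESG.list_sum_neg (l : List (S × S)) (f : S × S → S) :
    (l.map fun p => -(f p)).sum = -(l.map f).sum := by
  induction l with
  | nil => simp
  | cons q l ih => simp [ih, neg_add]; abel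

/-- every element of `sgMul A B` is a sum of products. -/
lemma NESG.exists_list_of_mem_sgMul {A B : AddSubgroup S} {t : S} (ht : t ∈ sgMul A B) :
    ∃ l : List (S × S), (∀ p ∈ l, p.1 ∈ A ∧ p.2 ∈ B) ∧
      (l.map fun p => p.1 * p.2).sum = t := by
  induction ht using AddSubgroup.closure_induction with
  | mem x hx =>
    obtain ⟨a, ha, b, hb, rfl⟩ := hx
    exact ⟨[(a, b)], by simp [ha, hb], by simp⟩
  | zero => exact ⟨[], by simp, by simp⟩
  | add x y hx hy ihx ihy =>
    obtain ⟨l1, hl1, hs1⟩ := ihx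
    obtain ⟨l2, hl2, hs2⟩ := ihy
    refine ⟨l1 ++ l2, ?_, by simp [hs1, hs2]⟩
    intro p hp
    rcases List.mem_append.1 hp with h | h
    · exact hl1 p h
    · exact hl2 p h
  | neg x hx ihx =>
    obtain ⟨l, hl, hs⟩ := ihx
    refine ⟨l.map fun p => (-p.1, p.2), ?_, ?_⟩
    · intro p hp
      obtain ⟨q, hq, rfl⟩ := List.mem_map.1 hp
      exact ⟨A.neg_mem (hl q hq).1, (hl q hq).2⟩
    · rw [List.map_map]
      have he : ((fun p : S × S => p.1 * p.2) ∘ fun p : S × S => (-p.1, p.2))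
          = fun p : S × S => -(p.1 * p.2) := by
        funext p; simp [neg_mul]
      rw [he, ← hs]
      exact NESG.list_sum_neg l _

lemma NESG.sgMul_assoc (A B C : AddSubgroup S) :
    sgMul (sgMul A B) C = sgMul A (sgMul B C) := by
  apply le_antisymm
  · refine NESG.sgMul_le fun t ht c hc => ?_
    have key : sgMul A B ≤ (sgMul A (sgMul B C)).comap (AddMonoidHom.mulRight c) := by
      refine NESG.sgMul_le fun a ha b hb => AddSubgroup.mem_comap.2 ?_
      rw [AddMonoidHom.mulRight_apply, mul_assoc]
      exact NESG.mem_sgMul ha (NESG.mem_sgMul hb hc)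
    have := key ht
    rwa [AddSubgroup.mem_comap, AddMonoidHom.mulRight_apply] at this
  · refine NESG.sgMul_le fun a ha t ht => ?_
    have key : sgMul B C ≤ (sgMul (sgMul A B) C).comap (AddMonoidHom.mulLeft a) := by
      refine NESG.sgMul_le fun b hb c hc => AddSubgroup.mem_comap.2 ?_
      simp only [AddMonoidHom.coe_mulLeft]
      rw [← mul_assoc]
      exact NESG.mem_sgMul (NESG.mem_sgMul ha hb) hc
    have := key ht
    rwa [AddSubgroup.mem_comap, AddMonoidHom.coe_mulLeft] at this

/-- Common left unit for a finite list. -/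
lemma NESG.common_left_unit (T M : AddSubgroup S)
    (hT : ∀ x ∈ T, ∀ y ∈ T, x * y ∈ T)
    (hTM : ∀ x ∈ T, ∀ m ∈ M, x * m ∈ M)
    (h : ∀ m ∈ M, ∃ a ∈ T, a * m = m) :
    ∀ l : List S, (∀ m ∈ l, m ∈ M) → ∃ a ∈ T, ∀ m ∈ l, a * m = m := by
  intro l
  induction l with
  | nil => exact fun _ => ⟨0, T.zero_mem, by simp⟩
  | cons m l ih =>
    intro hl
    obtain ⟨e', he'T, he'⟩ := ih fun x hx => hl x (List.mem_cons_of_mem _ hx)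
    have hmM : m ∈ M := hl m List.mem_cons_self
    obtain ⟨e2, he2T, he2⟩ := h (m - e' * m) (M.sub_mem hmM (hTM e' he'T m hmM))
    refine ⟨e' + e2 - e2 * e', T.sub_mem (T.add_mem he'T he2T) (hT e2 he2T e' he'T), ?_⟩
    intro x hx
    rcases List.mem_cons.1 hx with rfl | hx
    · have h2 : e2 * x - e2 * (e' * x) = x - e' * x := by
        rw [← mul_sub]; exact he2
      rw [sub_mul, add_mul, mul_assoc, add_sub_assoc, h2]
      abel
    · have hx' : e' * x = x := he' x hx
      rw [sub_mul, add_mul, mul_assoc, hx', add_sub_cancel_right]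

/-- Common right unit for a finite list. -/
lemma NESG.common_right_unit (T M : AddSubgroup S)
    (hT : ∀ x ∈ T, ∀ y ∈ T, x * y ∈ T)
    (hMT : ∀ m ∈ M, ∀ x ∈ T, m * x ∈ M)
    (h : ∀ m ∈ M, ∃ a ∈ T, m * a = m) :
    ∀ l : List S, (∀ m ∈ l, m ∈ M) → ∃ a ∈ T, ∀ m ∈ l, m * a = m := by
  intro l
  induction l with
  | nil => exact fun _ => ⟨0, T.zero_mem, by simp⟩
  | cons m l ih =>
    intro hl
    obtain ⟨e', he'T, he'⟩ := ih fun x hx => hl x (List.mem_cons_of_mem _ hx)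
    have hmM : m ∈ M := hl m List.mem_cons_self
    obtain ⟨e2, he2T, he2⟩ := h (m - m * e') (M.sub_mem hmM (hMT m hmM e' he'T))
    refine ⟨e' + e2 - e' * e2, T.sub_mem (T.add_mem he'T he2T) (hT e' he'T e2 he2T), ?_⟩
    intro x hx
    rcases List.mem_cons.1 hx with rfl | hx
    · have h2 : x * e2 - x * e' * e2 = x - x * e' := by
        rw [← sub_mul]; exact he2
      rw [mul_sub, mul_add, ← mul_assoc, add_sub_assoc, h2]
      abel
    · have hx' : x * e' = x := he' x hx
      rw [mul_sub, mul_add, ← mul_assoc, hx', add_sub_cancel_right]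

end Aux

lemma NESG.left_unit_of_list {S : Type*} [NonUnitalRing S] (e : S) (l : List (S × S))
    (he : ∀ p ∈ l, e * p.1 = p.1) :
    e * (l.map fun p => p.1 * p.2).sum = (l.map fun p => p.1 * p.2).sum := by
  rw [← List.sum_map_mul_left]
  refine congrArg List.sum (List.map_congr_left fun p hp => ?_)
  rw [← mul_assoc, he p hp]

lemma NESG.right_unit_of_list {S : Type*} [NonUnitalRing S] (e : S) (l : List (S × S))
    (he : ∀ p ∈ l, p.2 * e = p.2) :
    (l.map fun p => p.1 * p.2).sum * e = (l.map fun p => p.1 * p.2).sum := by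
  rw [← List.sum_map_mul_right]
  refine congrArg List.sum (List.map_congr_left fun p hp => ?_)
  rw [mul_assoc, he p hp]


/-- A `G`-graded ring `S` is nearly epsilon-strongly `G`-graded if and
only if `S` is symmetrically `G`-graded and, for each `g ∈ G`, the ring `S_g S_{g⁻¹}`
is s-unital. -/
theorem nearlyEpsilonStrongly_iff_symmetrically_and_sUnital
    {G : Type*} [Group G] [DecidableEq G] {S : Type*} [NonUnitalRing S]
    (𝒜 : G → AddSubgroup S)
    (hmul : ∀ (g h : G), ∀ a ∈ 𝒜 g, ∀ b ∈ 𝒜 h, a * b ∈ 𝒜 (g * h))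
    (hdecomp : DirectSum.IsInternal 𝒜) :
    IsNearlyEpsilonStronglyGraded 𝒜 ↔
      IsSymmetricallyGraded 𝒜 ∧ ∀ g : G, IsSUnitalSubgroup (sgMul (𝒜 g) (𝒜 g⁻¹)) := by
  -- `S_g S_{g⁻¹} ⊆ S_1`
  have hTle : ∀ g : G, sgMul (𝒜 g) (𝒜 g⁻¹) ≤ 𝒜 1 := fun g =>
    NESG.sgMul_le fun a ha b hb => by simpa using hmul g g⁻¹ a ha b hb
  -- `S_g S_{g⁻¹}` is closed under multiplication
  have hTmul : ∀ g : G, ∀ x ∈ sgMul (𝒜 g) (𝒜 g⁻¹), ∀ y ∈ sgMul (𝒜 g) (𝒜 g⁻¹),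
      x * y ∈ sgMul (𝒜 g) (𝒜 g⁻¹) := by
    intro g x hx y hy
    have hx1 : x ∈ 𝒜 1 := hTle g hx
    have key : sgMul (𝒜 g) (𝒜 g⁻¹) ≤
        (sgMul (𝒜 g) (𝒜 g⁻¹)).comap (AddMonoidHom.mulLeft x) := by
      refine NESG.sgMul_le fun a ha b hb => AddSubgroup.mem_comap.2 ?_
      simp only [AddMonoidHom.coe_mulLeft]
      rw [← mul_assoc]
      exact NESG.mem_sgMul (by simpa using hmul 1 g x hx1 a ha) hb
    have := key hy
    rwa [AddSubgroup.mem_comap, AddMonoidHom.coe_mulLeft] at this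
  -- `S_g S_{g⁻¹}` acts on `S_g` from the left, and on `S_{g⁻¹}` from the right
  have hTM : ∀ g : G, ∀ x ∈ sgMul (𝒜 g) (𝒜 g⁻¹), ∀ m ∈ 𝒜 g, x * m ∈ 𝒜 g :=
    fun g x hx m hm => by simpa using hmul 1 g x (hTle g hx) m hm
  have hMT : ∀ g : G, ∀ m ∈ 𝒜 g⁻¹, ∀ x ∈ sgMul (𝒜 g) (𝒜 g⁻¹), m * x ∈ 𝒜 g⁻¹ :=
    fun g m hm x hx => by simpa using hmul g⁻¹ 1 m hm x (hTle g hx)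
  constructor
  · intro hne
    constructor
    · -- symmetrically graded
      intro g
      apply le_antisymm
      · refine NESG.sgMul_le fun t ht s hs => ?_
        simpa using hmul 1 g t (hTle g ht) s hs
      · intro s hs
        obtain ⟨⟨t, htT, hts⟩, -⟩ := hne g s hs
        exact hts ▸ NESG.mem_sgMul htT hs
    · -- s-unitality
      intro g t ht
      obtain ⟨l, hl, hsum⟩ := NESG.exists_list_of_mem_sgMul ht
      constructor
      · obtain ⟨e, heT, he⟩ := NESG.common_left_unit (sgMul (𝒜 g) (𝒜 g⁻¹)) (𝒜 g)
          (hTmul g) (hTM g) (fun m hm => (hne g m hm).1) (l.map Prod.fst)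
          (by rintro m hm
              obtain ⟨p, hp, rfl⟩ := List.mem_map.1 hm
              exact (hl p hp).1)
        refine ⟨e, heT, ?_⟩
        rw [← hsum]
        exact NESG.left_unit_of_list e l fun p hp => he p.1 (List.mem_map_of_mem hp)
      · obtain ⟨e, heT, he⟩ := NESG.common_right_unit (sgMul (𝒜 g) (𝒜 g⁻¹)) (𝒜 g⁻¹)
          (hTmul g) (hMT g)
          (fun m hm => by
            have := (hne g⁻¹ m hm).2
            simpa only [inv_inv] using this) (l.map Prod.snd)
          (by rintro m hm
              obtain ⟨p, hp, rfl⟩ := List.mem_map.1 hm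
              exact (hl p hp).2)
        refine ⟨e, heT, ?_⟩
        rw [← hsum]
        exact NESG.right_unit_of_list e l fun p hp => he p.2 (List.mem_map_of_mem hp)
  · rintro ⟨hsym, hsu⟩ g s hs
    constructor
    · -- left: `s ∈ (S_g S_{g⁻¹}) s`
      have hs2 : s ∈ sgMul (sgMul (𝒜 g) (𝒜 g⁻¹)) (𝒜 g) := by rw [hsym g]; exact hs
      obtain ⟨l, hl, hsum⟩ := NESG.exists_list_of_mem_sgMul hs2
      obtain ⟨e, heT, he⟩ := NESG.common_left_unit (sgMul (𝒜 g) (𝒜 g⁻¹))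
          (sgMul (𝒜 g) (𝒜 g⁻¹)) (hTmul g) (hTmul g)
          (fun m hm => (hsu g m hm).1) (l.map Prod.fst)
          (by rintro m hm
              obtain ⟨p, hp, rfl⟩ := List.mem_map.1 hm
              exact (hl p hp).1)
      refine ⟨e, heT, ?_⟩
      rw [← hsum]
      exact NESG.left_unit_of_list e l fun p hp => he p.1 (List.mem_map_of_mem hp)
    · -- right: `s ∈ s (S_{g⁻¹} S_g)`
      have hT'mul : ∀ x ∈ sgMul (𝒜 g⁻¹) (𝒜 g), ∀ y ∈ sgMul (𝒜 g⁻¹) (𝒜 g),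
          x * y ∈ sgMul (𝒜 g⁻¹) (𝒜 g) := by
        have := hTmul g⁻¹
        simpa only [inv_inv] using this
      have hsu' : ∀ m ∈ sgMul (𝒜 g⁻¹) (𝒜 g), ∃ a ∈ sgMul (𝒜 g⁻¹) (𝒜 g), m * a = m := by
        have := hsu g⁻¹
        simp only [inv_inv] at this
        exact fun m hm => (this m hm).2
      have hs3 : s ∈ sgMul (𝒜 g) (sgMul (𝒜 g⁻¹) (𝒜 g)) := by
        rw [← NESG.sgMul_assoc, hsym g]; exact hs
      obtain ⟨l, hl, hsum⟩ := NESG.exists_list_of_mem_sgMul hs3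
      obtain ⟨e, heT, he⟩ := NESG.common_right_unit (sgMul (𝒜 g⁻¹) (𝒜 g))
          (sgMul (𝒜 g⁻¹) (𝒜 g)) hT'mul (fun m hm x hx => hT'mul m hm x hx)
          hsu' (l.map Prod.snd)
          (by rintro m hm
              obtain ⟨p, hp, rfl⟩ := List.mem_map.1 hm
              exact (hl p hp).2)
      refine ⟨e, heT, ?_⟩
      rw [← hsum]
      exact NESG.right_unit_of_list e l fun p hp => he p.2 (List.mem_map_of_mem hp)
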